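/- For f(z)² = 1 − z⁴ and the matrices Z, W defined by Z_{kk} = (ħ/2)(N+1−2k) and W_{k,k+1} = w_k with w_k² = (ħ⁴/2)[(N+1)³k − 3(N+1)²k(k+1) + 2(N+1)k(k+1)(2k+1) − 2k²(k+1)²], X = (W+W†)/2, Y = (W−W†)/(2i), one has X² + Y² + Z⁴ + ħ²Z² = ħ⁴((N²−1)²/16)·1_N. In particular, if ħ = 2/√(N²−1), then X² + Y² + Z⁴ + ħ²Z² = 1_N. -/

import Mathlib

open Matrix
noncomputable section

lemma sum_ite_fin (N m : ℕ) (f : Fin N → ℂ) :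
    (∑ k : Fin N, if (k : ℕ) = m then f k else 0)
      = if h : m < N then f ⟨m, h⟩ else 0 := by
  split
  · next h =>
    rw [Finset.sum_eq_single (⟨m, h⟩ : Fin N)]
    · simp
    · intro b _ hb
      have : (b : ℕ) ≠ m := fun hv => hb (Fin.ext hv)
      simp [this]
    · simp
  · next h =>
    apply Finset.sum_eq_zero
    intro k _
    have : (k : ℕ) ≠ m := by omega
    simp [this]

/-- for `f(z)² = 1 - z⁴` and the explicit representation matrices, one has
`X² + Y² + Z⁴ + ħ²Z² = ħ⁴((N²-1)²/16)·1`; in particular it equals `1` when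
`ħ = 2/√(N²-1)`. -/
theorem quartic_casimir (N : ℕ) (hbar : ℝ) (hpos : 0 < hbar)
    (w : ℕ → ℝ) (hwnn : ∀ k, 0 ≤ w k)
    (hw : ∀ k : ℕ, k ≤ N → w k ^ 2 =
      hbar ^ 4 / 2 * (((N : ℝ) + 1) ^ 3 * k - 3 * ((N : ℝ) + 1) ^ 2 * k * (k + 1) +
        2 * ((N : ℝ) + 1) * k * (k + 1) * (2 * k + 1) - 2 * k ^ 2 * (k + 1) ^ 2))
    (Z W X Y : Matrix (Fin N) (Fin N) ℂ)
    (hZ : Z = Matrix.diagonal (fun i : Fin N =>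
      ((hbar / 2 * ((N : ℝ) + 1 - 2 * ((i : ℕ) + 1)) : ℝ) : ℂ)))
    (hW : W = Matrix.of (fun i j : Fin N =>
      if (j : ℕ) = (i : ℕ) + 1 then ((w ((i : ℕ) + 1) : ℝ) : ℂ) else 0))
    (hX : X = (1 / 2 : ℂ) • (W + Wᴴ))
    (hY : Y = (1 / (2 * Complex.I)) • (W - Wᴴ)) :
    X ^ 2 + Y ^ 2 + Z ^ 4 + ((hbar : ℂ) ^ 2) • Z ^ 2 =
      ((hbar ^ 4 * ((N : ℝ) ^ 2 - 1) ^ 2 / 16 : ℝ) : ℂ) • (1 : Matrix (Fin N) (Fin N) ℂ) ∧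
    (hbar = 2 / Real.sqrt ((N : ℝ) ^ 2 - 1) →
      X ^ 2 + Y ^ 2 + Z ^ 4 + ((hbar : ℂ) ^ 2) • Z ^ 2 = (1 : Matrix (Fin N) (Fin N) ℂ)) := by
  -- w vanishes at the two ends
  have hW0 : w 0 ^ 2 = 0 := by
    have := hw 0 (Nat.zero_le N)
    push_cast at this
    linear_combination this
  have hWN : w N ^ 2 = 0 := by
    have := hw N le_rfl
    linear_combination this
  -- X² + Y² = (W Wᴴ + Wᴴ W)/2
  have hXY : X ^ 2 + Y ^ 2 = (1/2 : ℂ) • (W * Wᴴ + Wᴴ * W) := by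
    have hI : (1 / (2 * Complex.I)) * (1 / (2 * Complex.I)) = -(1/4) := by
      rw [div_mul_div_comm]
      rw [show (2 * Complex.I) * (2 * Complex.I) = -4 by
        rw [mul_mul_mul_comm, Complex.I_mul_I]; norm_num]
      norm_num
    rw [hX, hY]
    rw [pow_two, pow_two, smul_mul_smul_comm, smul_mul_smul_comm, hI]
    rw [add_mul, mul_add, mul_add, sub_mul, mul_sub, mul_sub]
    module
  -- W Wᴴ is diagonal
  have hWWH : W * Wᴴ = Matrix.diagonal (fun i : Fin N => ((w ((i : ℕ) + 1) ^ 2 : ℝ) : ℂ)) := by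
    subst hW
    ext i j
    rw [mul_apply]
    simp only [conjTranspose_apply, Matrix.of_apply, apply_ite (star : ℂ → ℂ), star_zero,
      mul_ite, ite_mul, zero_mul, mul_zero]
    rw [sum_ite_fin N ((j:ℕ)+1) (fun k =>
      if (k:ℕ) = (i:ℕ)+1 then ((w ((i:ℕ)+1):ℝ):ℂ) * star ((w ((j:ℕ)+1):ℝ):ℂ) else 0)]
    by_cases hij : i = j
    · subst hij
      simp only [diagonal_apply_eq]
      split
      · next h => simp [Complex.ofReal_pow, sq, Complex.star_def, Complex.conj_ofReal]
      · next h =>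
        have : (i:ℕ) + 1 = N := by omega
        rw [this]
        push_cast [hWN]
        simp
    · rw [diagonal_apply_ne _ hij]
      split
      · next h =>
        have : ¬ ((j:ℕ)+1 = (i:ℕ)+1) := by
          intro hv; exact hij (Fin.ext (by omega))
        simp [this]; intro hv; exact absurd (by omega) this
      · rfl
  -- Wᴴ W is diagonal
  have hWHW : Wᴴ * W = Matrix.diagonal (fun i : Fin N => ((w (i : ℕ) ^ 2 : ℝ) : ℂ)) := by
    subst hW
    ext i j
    rw [mul_apply]
    simp only [conjTranspose_apply, Matrix.of_apply, apply_ite (star : ℂ → ℂ), star_zero,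
      mul_ite, ite_mul, zero_mul, mul_zero]
    rcases Nat.eq_zero_or_eq_succ_pred (i : ℕ) with hi | hi
    · rw [Finset.sum_eq_zero (fun k _ => by
        have : ¬ ((i:ℕ) = (k:ℕ)+1) := by omega
        simp [this])]
      by_cases hij : i = j
      · subst hij; simp [hi, ← Complex.ofReal_pow, hW0]
      · rw [diagonal_apply_ne _ hij]
    · set m := (i:ℕ) - 1 with hm
      have hcond : ∀ k : ℕ, ((i:ℕ) = k + 1) ↔ (k = m) := by omega
      simp only [hcond]
      have hswap : ∀ k : Fin N,
          (if (j:ℕ) = (k:ℕ)+1 then if (k:ℕ) = m then star ((w ((k:ℕ)+1):ℝ):ℂ) * ((w ((k:ℕ)+1):ℝ):ℂ) else 0 else 0)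
          = (if (k:ℕ) = m then (fun k : Fin N => if (j:ℕ) = (k:ℕ)+1 then star ((w ((k:ℕ)+1):ℝ):ℂ) * ((w ((k:ℕ)+1):ℝ):ℂ) else 0) k else 0) := by
        intro k; by_cases h1 : (j:ℕ) = (k:ℕ)+1 <;> by_cases h2 : (k:ℕ) = m <;> simp [h1, h2]
      rw [Finset.sum_congr rfl (fun k _ => hswap k), sum_ite_fin N m (fun k =>
        if (j:ℕ) = (k:ℕ)+1 then star ((w ((k:ℕ)+1):ℝ):ℂ) * ((w ((k:ℕ)+1):ℝ):ℂ) else 0)]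
      have hmN : m < N := by omega
      rw [dif_pos hmN]
      by_cases hij : i = j
      · subst hij
        have : (i:ℕ) = m + 1 := by omega
        simp only [diagonal_apply_eq, this]
        simp [Complex.ofReal_pow, sq, Complex.star_def, Complex.conj_ofReal]
      · rw [diagonal_apply_ne _ hij]
        have : ¬ ((j:ℕ) = m + 1) := by
          intro hv; exact hij (Fin.ext (by omega))
        simp [this]
  -- the main identity
  have key : X ^ 2 + Y ^ 2 + Z ^ 4 + ((hbar : ℂ) ^ 2) • Z ^ 2 =
      ((hbar ^ 4 * ((N : ℝ) ^ 2 - 1) ^ 2 / 16 : ℝ) : ℂ) • (1 : Matrix (Fin N) (Fin N) ℂ) := by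
    rw [hXY, hWWH, hWHW, hZ, diagonal_pow, diagonal_pow]
    ext i j
    by_cases hij : i = j
    · subst hij
      simp only [Matrix.add_apply, Matrix.smul_apply, diagonal_apply_eq, Pi.pow_apply,
        Matrix.one_apply_eq, smul_eq_mul, mul_one]
      have e1 := hw ((i:ℕ)+1) (by omega)
      have e2 := hw (i:ℕ) (by omega)
      push_cast at e1 e2 ⊢
      have E1 := congrArg (fun x : ℝ => (x : ℂ)) e1
      have E2 := congrArg (fun x : ℝ => (x : ℂ)) e2
      push_cast at E1 E2
      linear_combination E1/2 + E2/2
    · simp [Matrix.add_apply, Matrix.smul_apply, diagonal_apply_ne _ hij,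
        Matrix.one_apply_ne hij]
  refine ⟨key, fun hh => ?_⟩
  rcases Nat.lt_or_ge N 2 with hN | hN
  · interval_cases N
    · exact Subsingleton.elim _ _
    · exfalso
      norm_num [Real.sqrt_zero] at hh
      linarith
  · have h2N : (2:ℝ) ≤ (N:ℝ) := by exact_mod_cast hN
    have hs : (0:ℝ) < (N:ℝ)^2 - 1 := by nlinarith
    have hsq : Real.sqrt ((N:ℝ)^2-1) ^ 2 = (N:ℝ)^2 - 1 := Real.sq_sqrt hs.le
    have h0 : Real.sqrt ((N:ℝ)^2-1) ≠ 0 := by positivity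
    have hscalar : hbar ^ 4 * ((N:ℝ)^2-1)^2/16 = 1 := by
      rw [hh]
      field_simp
      nlinarith [hsq]
    rw [key, hscalar]
    norm_num
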